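/- For all real numbers a, b, μ and σ > 0, ∫_ℝ (1/(√(2π)σ)) e^{−(x−μ)²/(2σ²)} erf(ax + b) dx = erf((aμ + b)/√(1 + 2a²σ²)). -/

import Mathlib

open Real MeasureTheory
set_option maxHeartbeats 1000000

/-- The error function `erf(x) = (2/√π) ∫₀^x e^{-t²} dt`. -/
noncomputable def erf (x : ℝ) : ℝ := (2 / Real.sqrt Real.pi) * ∫ t in (0:ℝ)..x, Real.exp (-t ^ 2)




lemma expsq_integrable : Integrable (fun t : ℝ => Real.exp (-t ^ 2)) := by
  simpa using integrable_exp_neg_mul_sq one_pos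

lemma expsq_continuous : Continuous (fun t : ℝ => Real.exp (-t ^ 2)) := by
  continuity

lemma erf_hasDerivAt (x : ℝ) :
    HasDerivAt erf (2 / Real.sqrt Real.pi * Real.exp (-x ^ 2)) x := by
  have h := intervalIntegral.integral_hasDerivAt_right
    (expsq_integrable.intervalIntegrable (a := 0) (b := x))
    (expsq_continuous.stronglyMeasurableAtFilter _ _)
    expsq_continuous.continuousAt
  exact h.const_mul (2 / Real.sqrt Real.pi)

lemma erf_continuous : Continuous erf :=
  Differentiable.continuous fun x => (erf_hasDerivAt x).differentiableAt

lemma erf_odd (x : ℝ) : erf (-x) = - erf x := by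
  unfold erf
  have h := intervalIntegral.integral_comp_neg (a := x) (b := 0)
      (fun t => Real.exp (-t ^ 2))
  simp only [neg_zero, neg_neg, even_two, Even.neg_pow] at h
  rw [← h, intervalIntegral.integral_symm]
  ring

lemma erf_abs_le (x : ℝ) : |erf x| ≤ 2 := by
  have key : ∀ y : ℝ, 0 ≤ y → |erf y| ≤ 2 := by
    intro y hy
    have h1 : (∫ t in (0:ℝ)..y, Real.exp (-t ^ 2)) = ∫ t in Set.Ioc 0 y, Real.exp (-t ^ 2) :=
      intervalIntegral.integral_of_le hy
    have h2 : (∫ t in Set.Ioc 0 y, Real.exp (-t ^ 2)) ≤ ∫ t : ℝ, Real.exp (-t ^ 2) :=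
      setIntegral_le_integral expsq_integrable (Filter.Eventually.of_forall fun t => (Real.exp_pos _).le)
    have h3 : (∫ t : ℝ, Real.exp (-t ^ 2)) = Real.sqrt Real.pi := by
      simpa using integral_gaussian 1
    have h4 : 0 ≤ ∫ t in (0:ℝ)..y, Real.exp (-t ^ 2) :=
      intervalIntegral.integral_nonneg hy fun t _ => (Real.exp_pos _).le
    have hπ : 0 < Real.sqrt Real.pi := Real.sqrt_pos.2 Real.pi_pos
    rw [erf, abs_mul, abs_of_nonneg h4, abs_of_nonneg (by positivity)]
    calc 2 / Real.sqrt Real.pi * (∫ t in (0:ℝ)..y, Real.exp (-t ^ 2))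
        ≤ 2 / Real.sqrt Real.pi * Real.sqrt Real.pi := by
          apply mul_le_mul_of_nonneg_left _ (by positivity)
          rw [h1]; exact h2.trans h3.le
      _ = 2 := by field_simp
  rcases le_or_gt 0 x with hx | hx
  · exact key x hx
  · have := key (-x) (by linarith)
    rw [erf_odd, abs_neg] at this
    exact this


lemma integral_gauss_quad {A : ℝ} (B C : ℝ) (hA : 0 < A) :
    ∫ x : ℝ, Real.exp (-(A * x ^ 2 + B * x + C)) =
      Real.sqrt (Real.pi / A) * Real.exp (B ^ 2 / (4 * A) - C) := by
  have hA' : A ≠ 0 := hA.ne'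
  calc ∫ x : ℝ, Real.exp (-(A * x ^ 2 + B * x + C))
      = ∫ x : ℝ, Real.exp (-A * (x + B / (2 * A)) ^ 2) * Real.exp (B ^ 2 / (4 * A) - C) := by
        congr 1; funext x; rw [← Real.exp_add]; congr 1; field_simp; ring
    _ = (∫ x : ℝ, Real.exp (-A * (x + B / (2 * A)) ^ 2)) * Real.exp (B ^ 2 / (4 * A) - C) :=
        integral_mul_const _ _
    _ = (∫ x : ℝ, Real.exp (-A * x ^ 2)) * Real.exp (B ^ 2 / (4 * A) - C) := by
        rw [integral_add_right_eq_self (fun x => Real.exp (-A * x ^ 2)) (B / (2 * A))]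
    _ = Real.sqrt (Real.pi / A) * Real.exp (B ^ 2 / (4 * A) - C) := by rw [integral_gaussian]

lemma gauss_conv (a b μ σ : ℝ) (hσ : 0 < σ) :
    ∫ x : ℝ, (1 / (Real.sqrt (2 * Real.pi) * σ)) * Real.exp (-(x - μ) ^ 2 / (2 * σ ^ 2)) *
        (2 / Real.sqrt Real.pi * Real.exp (-(a * x + b) ^ 2)) =
      2 / Real.sqrt Real.pi * (1 / Real.sqrt (1 + 2 * a ^ 2 * σ ^ 2)) *
        Real.exp (-(a * μ + b) ^ 2 / (1 + 2 * a ^ 2 * σ ^ 2)) := by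
  set K : ℝ := 1 + 2 * a ^ 2 * σ ^ 2 with hKdef
  have hK : 0 < K := by positivity
  have hσ' : σ ≠ 0 := hσ.ne'
  set A : ℝ := 1 / (2 * σ ^ 2) + a ^ 2 with hAdef
  set B : ℝ := -μ / σ ^ 2 + 2 * a * b with hBdef
  set C : ℝ := μ ^ 2 / (2 * σ ^ 2) + b ^ 2 with hCdef
  have hA : 0 < A := by positivity
  have step1 : ∀ x : ℝ,
      (1 / (Real.sqrt (2 * Real.pi) * σ)) * Real.exp (-(x - μ) ^ 2 / (2 * σ ^ 2)) *
        (2 / Real.sqrt Real.pi * Real.exp (-(a * x + b) ^ 2)) =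
      (1 / (Real.sqrt (2 * Real.pi) * σ) * (2 / Real.sqrt Real.pi)) *
        Real.exp (-(A * x ^ 2 + B * x + C)) := by
    intro x
    have key : -(x - μ) ^ 2 / (2 * σ ^ 2) + -(a * x + b) ^ 2 = -(A * x ^ 2 + B * x + C) := by
      rw [hAdef, hBdef, hCdef]; field_simp; ring
    rw [← key, Real.exp_add]; ring
  rw [show (∫ x : ℝ, (1 / (Real.sqrt (2 * Real.pi) * σ)) * Real.exp (-(x - μ) ^ 2 / (2 * σ ^ 2)) *
        (2 / Real.sqrt Real.pi * Real.exp (-(a * x + b) ^ 2))) =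
      ∫ x : ℝ, (1 / (Real.sqrt (2 * Real.pi) * σ) * (2 / Real.sqrt Real.pi)) *
        Real.exp (-(A * x ^ 2 + B * x + C)) from by simp_rw [step1]]
  rw [integral_const_mul, integral_gauss_quad B C hA]
  have hsqrt : Real.sqrt (Real.pi / A) = Real.sqrt (2 * Real.pi) * σ / Real.sqrt K := by
    have h1 : Real.pi / A = 2 * Real.pi * σ ^ 2 / K := by
      rw [hAdef, hKdef]; field_simp
    rw [h1, Real.sqrt_div (by positivity), Real.sqrt_mul (by positivity),
      Real.sqrt_sq hσ.le]
  have hexp : B ^ 2 / (4 * A) - C = -(a * μ + b) ^ 2 / K := by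
    rw [hAdef, hBdef, hCdef, hKdef]; field_simp; ring
  rw [hsqrt, hexp]
  have h2π : Real.sqrt (2 * Real.pi) ≠ 0 := by positivity
  have hKs : Real.sqrt K ≠ 0 := by positivity
  have hπs : Real.sqrt Real.pi ≠ 0 := by positivity
  field_simp









theorem stmt4 (a b μ σ : ℝ) (hσ : 0 < σ) :
    (∫ x : ℝ, (1 / (Real.sqrt (2 * Real.pi) * σ)) * Real.exp (-(x - μ) ^ 2 / (2 * σ ^ 2)) *
        erf (a * x + b)) =
      erf ((a * μ + b) / Real.sqrt (1 + 2 * a ^ 2 * σ ^ 2)) := by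
  have hσ' : σ ≠ 0 := hσ.ne'
  set K : ℝ := 1 + 2 * a ^ 2 * σ ^ 2 with hKdef
  have hK : 0 < K := by positivity
  have hKs : 0 < Real.sqrt K := Real.sqrt_pos.2 hK
  set g : ℝ → ℝ := fun x =>
    (1 / (Real.sqrt (2 * Real.pi) * σ)) * Real.exp (-(x - μ) ^ 2 / (2 * σ ^ 2)) with hgdef
  have hg_cont : Continuous g := by
    apply Continuous.mul continuous_const
    exact Real.continuous_exp.comp (by fun_prop)
  have hg_nonneg : ∀ x, 0 ≤ g x := fun x => by positivity
  have hg_int : Integrable g := by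
    have h1 : Integrable (fun x : ℝ => Real.exp (-(1 / (2 * σ ^ 2)) * x ^ 2)) :=
      integrable_exp_neg_mul_sq (by positivity)
    have h2 := (h1.comp_sub_right μ).const_mul (1 / (Real.sqrt (2 * Real.pi) * σ))
    refine h2.congr (Filter.Eventually.of_forall fun x => ?_)
    simp only [hgdef]
    congr 1
    ring
  set L : ℝ → ℝ := fun c => ∫ x : ℝ, g x * erf (a * x + c) with hLdef
  set R : ℝ → ℝ := fun c => erf ((a * μ + c) / Real.sqrt K) with hRdef
  set D : ℝ → ℝ := fun c =>
    2 / Real.sqrt Real.pi * (1 / Real.sqrt K) * Real.exp (-(a * μ + c) ^ 2 / K) with hDdef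
  -- derivative of L
  have hDL : ∀ c : ℝ, HasDerivAt L (D c) c := by
    intro c
    have key := hasDerivAt_integral_of_dominated_loc_of_deriv_le (μ := volume)
      (F := fun c x => g x * erf (a * x + c))
      (F' := fun c x => g x * (2 / Real.sqrt Real.pi * Real.exp (-(a * x + c) ^ 2)))
      (x₀ := c) (bound := fun x => g x * (2 / Real.sqrt Real.pi))
      (s := Metric.ball c 1) (Metric.ball_mem_nhds c one_pos)
      (Filter.Eventually.of_forall fun c' =>
        (hg_cont.mul (erf_continuous.comp (by fun_prop))).aestronglyMeasurable)
      ?_ ?_ ?_ ?_ ?_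
    · rcases key with ⟨-, hd⟩
      have heq : (∫ x : ℝ, g x * (2 / Real.sqrt Real.pi * Real.exp (-(a * x + c) ^ 2))) = D c := by
        simp only [hgdef, hDdef]
        exact gauss_conv a c μ σ hσ
      rwa [heq] at hd
    · -- Integrable (F c)
      refine (Integrable.bdd_mul (f := fun x => erf (a * x + c)) (c := 2) hg_int
        ((erf_continuous.comp (by fun_prop)).aestronglyMeasurable) (Filter.Eventually.of_forall fun x => ?_)).congr
        (Filter.Eventually.of_forall fun x => mul_comm _ _)
      simpa using erf_abs_le (a * x + c)
    · have hc3 : Continuous fun x : ℝ => 2 / Real.sqrt Real.pi * Real.exp (-(a * x + c) ^ 2) := by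
        fun_prop
      exact ((hg_cont.mul hc3).aestronglyMeasurable)
    · refine Filter.Eventually.of_forall fun x => fun c' _ => ?_
      have h1 : Real.exp (-(a * x + c') ^ 2) ≤ 1 :=
        Real.exp_le_one_iff.2 (neg_nonpos.2 (sq_nonneg _))
      have h2 : (0:ℝ) ≤ 2 / Real.sqrt Real.pi := by positivity
      rw [Real.norm_eq_abs, abs_mul, abs_of_nonneg (hg_nonneg x),
        abs_of_nonneg (by positivity)]
      calc g x * (2 / Real.sqrt Real.pi * Real.exp (-(a * x + c') ^ 2))
          ≤ g x * (2 / Real.sqrt Real.pi * 1) := by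
            apply mul_le_mul_of_nonneg_left _ (hg_nonneg x)
            exact mul_le_mul_of_nonneg_left h1 h2
        _ = g x * (2 / Real.sqrt Real.pi) := by ring
    · exact hg_int.mul_const _
    · refine Filter.Eventually.of_forall fun x => fun c' _ => ?_
      have h1 : HasDerivAt (fun y : ℝ => a * x + y) 1 c' := (hasDerivAt_id c').const_add (a * x)
      have h2 := (erf_hasDerivAt (a * x + c')).comp c' h1
      have h3 := h2.const_mul (g x)
      simpa [Function.comp] using h3
  -- derivative of R
  have hDR : ∀ c : ℝ, HasDerivAt R (D c) c := by
    intro c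
    have h1 : HasDerivAt (fun y : ℝ => (a * μ + y) / Real.sqrt K) (1 / Real.sqrt K) c := by
      simpa using ((hasDerivAt_id c).const_add (a * μ)).div_const (Real.sqrt K)
    have h2 := (erf_hasDerivAt ((a * μ + c) / Real.sqrt K)).comp c h1
    have heq : 2 / Real.sqrt Real.pi * Real.exp (-((a * μ + c) / Real.sqrt K) ^ 2) *
        (1 / Real.sqrt K) = D c := by
      rw [div_pow, Real.sq_sqrt hK.le, hDdef]
      ring_nf
    rw [← heq]
    exact h2
  -- L - R is constant
  have hconst : ∀ c : ℝ, L c - R c = L (-(a * μ)) - R (-(a * μ)) := by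
    intro c
    have hd : ∀ y : ℝ, HasDerivAt (fun y => L y - R y) 0 y := by
      intro y
      have h := (hDL y).sub (hDR y); rwa [sub_self] at h
    exact is_const_of_deriv_eq_zero (fun y => (hd y).differentiableAt)
      (fun y => (hd y).deriv) c (-(a * μ))
  have hR0 : R (-(a * μ)) = 0 := by
    simp only [hRdef, add_neg_cancel, zero_div]
    simp [erf]
  have hL0 : L (-(a * μ)) = 0 := by
    have hflip : ∀ x : ℝ, g (2 * μ - x) * erf (a * (2 * μ - x) + -(a * μ)) =
        -(g x * erf (a * x + -(a * μ))) := by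
      intro x
      have hgx : g (2 * μ - x) = g x := by
        simp only [hgdef]
        congr 2
        ring
      have harg : a * (2 * μ - x) + -(a * μ) = -(a * x + -(a * μ)) := by ring
      rw [hgx, harg, erf_odd]
      ring
    have hsub : (∫ x : ℝ, g x * erf (a * x + -(a * μ))) =
        ∫ x : ℝ, g (2 * μ - x) * erf (a * (2 * μ - x) + -(a * μ)) := by
      have e1 : (∫ x : ℝ, g (2 * μ - x) * erf (a * (2 * μ - x) + -(a * μ))) =
          ∫ x : ℝ, g (-(x - 2 * μ)) * erf (a * (-(x - 2 * μ)) + -(a * μ)) := by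
        congr 1; funext x; congr 2 <;> ring
      rw [e1,
        integral_sub_right_eq_self (fun x : ℝ => g (-x) * erf (a * (-x) + -(a * μ))) (2 * μ)]
      exact (integral_neg_eq_self (fun x : ℝ => g x * erf (a * x + -(a * μ))) volume).symm
    have : L (-(a * μ)) = - L (-(a * μ)) := by
      calc L (-(a * μ)) = ∫ x : ℝ, g (2 * μ - x) * erf (a * (2 * μ - x) + -(a * μ)) := hsub
        _ = ∫ x : ℝ, -(g x * erf (a * x + -(a * μ))) := by simp_rw [hflip]
        _ = - L (-(a * μ)) := integral_neg _
    linarith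
  have : L b - R b = 0 := by rw [hconst b, hR0, hL0]; ring
  have hfin : L b = R b := by linarith
  exact hfin
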